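/- Let G be a finite abelian group of order prime to char k, where k is an algebraically closed field. Let N be a finite-dimensional k[G]-module and φ a k[t][G]-linear endomorphism of a finitely generated free k[t][G]-module M. Then the determinant over k[t] of the induced endomorphism φ* on Hom_{k[G]}(N, M) equals det_{k[t]}( det_{k[t][G]}(φ, M) acting on N ⊗_k k[t] ). -/

import Mathlib

open TensorProduct

noncomputable section

namespace Stmt8

variable (k : Type*) [Field k] (G : Type*) [CommGroup G] [Fintype G]

/-- The canonical map `k[G] → k[t][G]`. -/
def BtoA : MonoidAlgebra k G →ₐ[k] MonoidAlgebra (Polynomial k) G :=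
  MonoidAlgebra.lift k _ G (MonoidAlgebra.of (Polynomial k) G)

/-- `k[t][G]` as a `k[G]`-module, via `k[G] → k[t][G]`. -/
instance : Module (MonoidAlgebra k G) (MonoidAlgebra (Polynomial k) G) :=
  Module.compHom _ (BtoA k G).toRingHom

instance : IsScalarTower (MonoidAlgebra k G) (MonoidAlgebra (Polynomial k) G)
    (MonoidAlgebra (Polynomial k) G) :=
  ⟨fun b a c => by
    show (BtoA k G b * a) * c = BtoA k G b * (a * c)
    rw [mul_assoc]⟩

instance : SMulCommClass (MonoidAlgebra k G) (Polynomial k)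
    (MonoidAlgebra (Polynomial k) G) :=
  ⟨fun b p a => by
    show BtoA k G b * (p • a) = p • (BtoA k G b * a)
    exact mul_smul_comm p _ a⟩

variable (N : Type*) [AddCommGroup N] [Module (MonoidAlgebra k G) N]
  [Module k N] [IsScalarTower k (MonoidAlgebra k G) N] [FiniteDimensional k N]

instance smulCommN : SMulCommClass (MonoidAlgebra k G) k N :=
  ⟨fun b c w => by
    rw [← algebraMap_smul (MonoidAlgebra k G) c w,
      ← algebraMap_smul (MonoidAlgebra k G) c (b • w), smul_smul, smul_smul, mul_comm]⟩

/-- The representation of `G` on `N` underlying its `k[G]`-module structure. -/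
def gRep : Representation k G N where
  toFun g :=
    { toFun := fun x => MonoidAlgebra.of k G g • x
      map_add' := fun x y => smul_add _ x y
      map_smul' := fun c x => by simpa using smul_comm (MonoidAlgebra.of k G g) c x }
  map_one' := by
    ext x
    show MonoidAlgebra.of k G 1 • x = x
    rw [map_one, one_smul]
  map_mul' g h := by
    ext x
    show MonoidAlgebra.of k G (g * h) • x = _
    rw [map_mul, mul_smul]
    rfl

/-- The base-changed representation of `G` on `N ⊗_k k[t] = N[t]`. -/
def gRepT : G →* Module.End (Polynomial k) (Polynomial k ⊗[k] N) where
  toFun g := (gRep k G N g).baseChange (Polynomial k)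
  map_one' := by
    show LinearMap.baseChange (Polynomial k) ((gRep k G N) 1) = 1
    rw [map_one, Module.End.one_eq_id, LinearMap.baseChange_id]
    rfl
  map_mul' g h := by
    show LinearMap.baseChange (Polynomial k) ((gRep k G N) (g * h)) = _
    rw [map_mul, Module.End.mul_eq_comp, LinearMap.baseChange_comp]
    rfl

/-- The action of `k[t][G]` on `N[t]` extending the `G`-action on `N`. -/
def act : MonoidAlgebra (Polynomial k) G →ₐ[Polynomial k]
    Module.End (Polynomial k) (Polynomial k ⊗[k] N) :=
  MonoidAlgebra.lift (Polynomial k) _ G (gRepT k G N)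

/-- let `k` be algebraically closed, `G` a finite abelian group of order prime
to `char k`, `N` a finite-dimensional `k[G]`-module, and `φ` a `k[t][G]`-linear endomorphism
of a finitely generated free `k[t][G]`-module `M = (k[t][G])^ι`.  Then the `k[t]`-determinant
of the induced endomorphism `φ^*` of `Hom_{k[G]}(N, M)` equals the `k[t]`-determinant of the
element `det_{k[t][G]}(φ, M) ∈ k[t][G]` acting on `N ⊗_k k[t]`. -/
def homMap (ι : Type*) [Fintype ι]
    (φ : (ι → MonoidAlgebra (Polynomial k) G) →ₗ[MonoidAlgebra (Polynomial k) G]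
      (ι → MonoidAlgebra (Polynomial k) G)) :
    (N →ₗ[MonoidAlgebra k G] (ι → MonoidAlgebra (Polynomial k) G)) →ₗ[Polynomial k]
    (N →ₗ[MonoidAlgebra k G] (ι → MonoidAlgebra (Polynomial k) G)) where
  toFun f := (φ.restrictScalars (MonoidAlgebra k G)) ∘ₗ f
  map_add' f g := by
    ext x
    simp
  map_smul' p f := by
    ext x
    simp

section Aux
set_option linter.unusedSectionVars false

open MonoidAlgebra Finset

/-- The character `G →* S` attached to `χ : G →* kˣ`. -/
def chiHom (S : Type*) [CommRing S] [Algebra k S] (χ : G →* kˣ) : G →* S :=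
  ((algebraMap k S : k →+* S) : k →* S).comp ((Units.coeHom k).comp χ)

@[simp] lemma chiHom_apply (S : Type*) [CommRing S] [Algebra k S] (χ : G →* kˣ) (g : G) :
    chiHom k G S χ g = algebraMap k S (χ g) := rfl

/-- The algebra character `S[G] →ₐ[S] S` attached to `χ`. -/
def chiA (S : Type*) [CommRing S] [Algebra k S] (χ : G →* kˣ) :
    MonoidAlgebra S G →ₐ[S] S :=
  MonoidAlgebra.lift S S G (chiHom k G S χ)

lemma chiA_single (S : Type*) [CommRing S] [Algebra k S] (χ : G →* kˣ) (g : G) (s : S) :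
    chiA k G S χ (MonoidAlgebra.single g s) = s * algebraMap k S (χ g) := by
  rw [chiA, MonoidAlgebra.lift_single, chiHom_apply, smul_eq_mul]

lemma chiA_of (S : Type*) [CommRing S] [Algebra k S] (χ : G →* kˣ) (g : G) :
    chiA k G S χ (MonoidAlgebra.of S G g) = algebraMap k S (χ g) := by
  rw [chiA, MonoidAlgebra.lift_of, chiHom_apply]

/-- The idempotent attached to a character `χ`. -/
def idm (S : Type*) [CommRing S] [Algebra k S] (χ : G →* kˣ) : MonoidAlgebra S G :=
  ∑ g : G, MonoidAlgebra.single g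
    (algebraMap k S ((Fintype.card G : k)⁻¹ * ((χ g⁻¹ : kˣ) : k)))

lemma idm_apply (S : Type*) [CommRing S] [Algebra k S] (χ : G →* kˣ) (g : G) :
    (idm k G S χ).coeff g = algebraMap k S ((Fintype.card G : k)⁻¹ * ((χ g⁻¹ : kˣ) : k)) := by
  classical
  rw [idm]
  rw [MonoidAlgebra.coeff_sum, Finset.sum_apply']
  rw [Finset.sum_eq_single g]
  · simp
  · intro b _ hb
    exact Finsupp.single_eq_of_ne hb.symm
  · simp

lemma single_mul_idm (S : Type*) [CommRing S] [Algebra k S] (χ : G →* kˣ) (h : G) (s : S) :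
    MonoidAlgebra.single h s * idm k G S χ = (s * algebraMap k S (χ h)) • idm k G S χ := by
  classical
  rw [idm, Finset.mul_sum, Finset.smul_sum]
  refine Fintype.sum_equiv (Equiv.mulLeft h) _ _ fun g => ?_
  have h1 : ((χ h : kˣ) : k) * ((χ h⁻¹ : kˣ) : k) = 1 := by
    rw [← Units.val_mul, ← map_mul, mul_inv_cancel, map_one, Units.val_one]
  have key : (Fintype.card G : k)⁻¹ * ((χ g⁻¹ : kˣ) : k)
      = ((χ h : kˣ) : k) * ((Fintype.card G : k)⁻¹ * ((χ ((h*g)⁻¹) : kˣ) : k)) := by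
    rw [mul_inv_rev, map_mul, Units.val_mul]
    linear_combination (-((Fintype.card G : k)⁻¹ * ((χ g⁻¹ : kˣ) : k))) * h1
  rw [MonoidAlgebra.single_mul_single, MonoidAlgebra.smul_single', Equiv.coe_mulLeft]
  congr 1
  rw [mul_assoc, ← map_mul]
  exact congrArg _ (congrArg _ key)

lemma mul_idm (S : Type*) [CommRing S] [Algebra k S] (χ : G →* kˣ) (a : MonoidAlgebra S G) :
    a * idm k G S χ = chiA k G S χ a • idm k G S χ := by
  induction a using MonoidAlgebra.induction_linear with
  | zero => simp
  | add f g hf hg => rw [add_mul, hf, hg, map_add, add_smul]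
  | single g s => rw [single_mul_idm, chiA_single]

end Aux
lemma neZero_exponent (hchar : (Fintype.card G : k) ≠ 0) :
    NeZero ((Monoid.exponent G : k)) := by
  constructor
  intro h
  obtain ⟨m, hm⟩ := Group.exponent_dvd_card (G := G)
  apply hchar
  rw [hm]
  push_cast
  rw [h, zero_mul]

lemma sum_char_eq_zero [Fintype (G →* kˣ)] [IsAlgClosed k]
    (hchar : (Fintype.card G : k) ≠ 0) {g : G} (hg : g ≠ 1) :
    ∑ χ : G →* kˣ, ((χ g : kˣ) : k) = 0 := by
  haveI := neZero_exponent k G hchar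
  obtain ⟨ψ, hψ⟩ := CommGroup.exists_apply_ne_one_of_hasEnoughRootsOfUnity G k hg
  have h2 : ∑ χ : G →* kˣ, ((χ g : kˣ) : k)
      = ((ψ g : kˣ) : k) * ∑ χ : G →* kˣ, ((χ g : kˣ) : k) := by
    rw [Finset.mul_sum]
    refine Fintype.sum_equiv (Equiv.mulLeft ψ⁻¹) _ _ fun χ => ?_
    rw [Equiv.coe_mulLeft, MonoidHom.mul_apply, MonoidHom.inv_apply, Units.val_mul,
      ← mul_assoc, ← Units.val_mul, mul_inv_cancel, Units.val_one, one_mul]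
  have h3 : (((ψ g : kˣ) : k) - 1) * ∑ χ : G →* kˣ, ((χ g : kˣ) : k) = 0 := by
    rw [sub_mul, one_mul, ← h2, sub_self]
  rcases mul_eq_zero.mp h3 with h | h
  · exact absurd (Units.ext (by rw [Units.val_one]; exact sub_eq_zero.mp h)) hψ
  · exact h

lemma sum_over_G_eq_zero {χ : G →* kˣ} (hχ : χ ≠ 1) :
    ∑ g : G, ((χ g : kˣ) : k) = 0 := by
  have : ∃ g₀ : G, χ g₀ ≠ 1 := by
    by_contra h
    push_neg at h
    exact hχ (MonoidHom.ext fun g => h g)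
  obtain ⟨g₀, hg₀⟩ := this
  have h2 : ∑ g : G, ((χ g : kˣ) : k) = ((χ g₀ : kˣ) : k) * ∑ g : G, ((χ g : kˣ) : k) := by
    rw [Finset.mul_sum]
    refine Fintype.sum_equiv (Equiv.mulLeft g₀⁻¹) _ _ fun g => ?_
    rw [Equiv.coe_mulLeft, map_mul, Units.val_mul, ← mul_assoc, ← Units.val_mul,
      ← map_mul, mul_inv_cancel, map_one, Units.val_one, one_mul]
  have h3 : (((χ g₀ : kˣ) : k) - 1) * ∑ g : G, ((χ g : kˣ) : k) = 0 := by
    rw [sub_mul, one_mul, ← h2, sub_self]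
  rcases mul_eq_zero.mp h3 with h | h
  · exact absurd (Units.ext (by rw [Units.val_one]; exact sub_eq_zero.mp h)) hg₀
  · exact h

lemma card_characters [Fintype (G →* kˣ)] [IsAlgClosed k]
    (hchar : (Fintype.card G : k) ≠ 0) :
    Fintype.card (G →* kˣ) = Fintype.card G := by
  haveI := neZero_exponent k G hchar
  obtain ⟨e⟩ := CommGroup.monoidHom_mulEquiv_of_hasEnoughRootsOfUnity G k
  exact Fintype.card_congr e.toEquiv

lemma sum_idm [Fintype (G →* kˣ)] [IsAlgClosed k]
    (hchar : (Fintype.card G : k) ≠ 0) :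
    ∑ χ : G →* kˣ, idm k G k χ = 1 := by
  classical
  ext g
  rw [MonoidAlgebra.coeff_sum, Finset.sum_apply']
  simp only [idm_apply, Algebra.algebraMap_self, RingHom.id_apply]
  rw [← Finset.mul_sum]
  rw [MonoidAlgebra.one_def, MonoidAlgebra.coeff_single]
  by_cases hg : g = 1
  · subst hg
    simp only [inv_one, map_one, Units.val_one, Finset.sum_const, Finset.card_univ, nsmul_eq_mul,
      mul_one, Finsupp.single_eq_same]
    rw [card_characters k G hchar]
    exact inv_mul_cancel₀ hchar
  · have hginv : (g⁻¹ : G) ≠ 1 := inv_ne_one.mpr hg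
    rw [sum_char_eq_zero k G hchar hginv, mul_zero, Finsupp.single_apply]
    simp [Ne.symm hg]

open scoped Classical in
/-- The scalar by which `idm ψ` acts on a `χ`-eigenvector: `δ_{ψχ}`. -/
lemma chiA_idm [Fintype (G →* kˣ)] (hchar : (Fintype.card G : k) ≠ 0)
    (χ ψ : G →* kˣ) :
    chiA k G k χ (idm k G k ψ) = if ψ = χ then 1 else 0 := by
  classical
  rw [idm, map_sum]
  simp only [chiA_single, Algebra.algebraMap_self, RingHom.id_apply]
  by_cases h : ψ = χ
  · subst h
    simp only [mul_assoc]
    have : ∀ g : G, ((ψ g⁻¹ : kˣ) : k) * ((ψ g : kˣ) : k) = 1 := fun g => by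
      rw [← Units.val_mul, ← map_mul, inv_mul_cancel, map_one, Units.val_one]
    simp only [this]
    simp [Finset.card_univ, if_pos]
    exact mul_inv_cancel₀ hchar
  · rw [if_neg h]
    have hne : χ * ψ⁻¹ ≠ 1 := by
      intro hc
      apply h
      ext g
      have := DFunLike.congr_fun hc g
      simp only [MonoidHom.mul_apply, MonoidHom.inv_apply, MonoidHom.one_apply] at this
      have := mul_inv_eq_one.mp this
      rw [this]
    simp only [mul_assoc]
    rw [← Finset.mul_sum]
    have h0 : ∑ g : G, ((ψ g⁻¹ : kˣ) : k) * ((χ g : kˣ) : k) = 0 := by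
      refine Eq.trans (Finset.sum_congr rfl fun g _ => ?_) (sum_over_G_eq_zero k G hne)
      simp [MonoidHom.mul_apply, MonoidHom.inv_apply, Units.val_mul, map_inv, mul_comm]
    rw [h0, mul_zero]
/-- The `χ`-eigenspace of `N`. -/
def eig (χ : G →* kˣ) : Submodule k N where
  carrier := {w | ∀ g : G, MonoidAlgebra.of k G g • w = ((χ g : kˣ) : k) • w}
  add_mem' := fun hx hy g => by rw [smul_add, hx g, hy g, smul_add]
  zero_mem' := fun g => by rw [smul_zero, smul_zero]
  smul_mem' := fun c x hx g => by
    rw [smul_comm (MonoidAlgebra.of k G g) c x, hx g, smul_comm]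

lemma smul_eig {χ : G →* kˣ} {w : N} (hw : w ∈ eig k G N χ) (b : MonoidAlgebra k G) :
    b • w = chiA k G k χ b • w := by
  induction b using MonoidAlgebra.induction_linear with
  | zero => rw [zero_smul, map_zero, zero_smul]
  | add f g hf hg => rw [add_smul, hf, hg, map_add, add_smul]
  | single g c =>
    show MonoidAlgebra.single g c • w = chiA k G k χ (MonoidAlgebra.single g c) • w
    have h1 : MonoidAlgebra.single g c = c • MonoidAlgebra.of k G g := by
      rw [MonoidAlgebra.of_apply, MonoidAlgebra.smul_single', mul_one]
    rw [h1, smul_assoc, hw g, map_smul, chiA_of]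
    simp [smul_smul]

open scoped Classical in
lemma idm_smul_eig [Fintype (G →* kˣ)] (hchar : (Fintype.card G : k) ≠ 0)
    {χ : G →* kˣ} {w : N} (hw : w ∈ eig k G N χ) (ψ : G →* kˣ) :
    idm k G k ψ • w = if ψ = χ then w else 0 := by
  classical
  rw [smul_eig k G N hw, chiA_idm k G hchar χ ψ]
  split <;> simp

lemma idm_smul_mem_eig (χ : G →* kˣ) (x : N) : idm k G k χ • x ∈ eig k G N χ := by
  intro g
  rw [← mul_smul]
  have h1 : MonoidAlgebra.of k G g * idm k G k χ
      = ((χ g : kˣ) : k) • idm k G k χ := by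
    rw [MonoidAlgebra.of_apply, single_mul_idm]
    simp
  rw [h1, smul_assoc]

lemma iSup_eig_eq_top [Fintype (G →* kˣ)] [IsAlgClosed k]
    (hchar : (Fintype.card G : k) ≠ 0) :
    ⨆ χ : G →* kˣ, eig k G N χ = ⊤ := by
  rw [eq_top_iff]
  intro x _
  have h1 : x = ∑ χ : G →* kˣ, idm k G k χ • x := by
    rw [← Finset.sum_smul, sum_idm k G hchar, one_smul]
  rw [h1]
  exact Submodule.sum_mem _ fun χ _ =>
    Submodule.mem_iSup_of_mem χ (idm_smul_mem_eig k G N χ x)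

/-- Smultiplication by `idm χ` as a `k`-linear endomorphism of `N`. -/
def idmSmul (χ : G →* kˣ) : N →ₗ[k] N where
  toFun := fun x => idm k G k χ • x
  map_add' := fun x y => smul_add _ x y
  map_smul' := fun c x => by simpa using smul_comm (idm k G k χ) c x

lemma eig_indep [Fintype (G →* kˣ)] (hchar : (Fintype.card G : k) ≠ 0) :
    iSupIndep (eig k G N) := by
  classical
  intro χ
  rw [Submodule.disjoint_def]
  intro x hx1 hx2
  have hker : (⨆ (ψ) (_ : ψ ≠ χ), eig k G N ψ) ≤ LinearMap.ker (idmSmul k G N χ) := by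
    refine iSup_le fun ψ => iSup_le fun hψ w hw => ?_
    rw [LinearMap.mem_ker]
    show idm k G k χ • w = 0
    rw [idm_smul_eig k G N hchar hw χ, if_neg (Ne.symm hψ)]
  have h1 : idm k G k χ • x = x := by
    rw [idm_smul_eig k G N hchar hx1 χ, if_pos rfl]
  have h2 : idm k G k χ • x = 0 := hker hx2
  rw [h1] at h2
  exact h2

lemma exists_eigenbasis [Fintype (G →* kˣ)] [IsAlgClosed k]
    (hchar : (Fintype.card G : k) ≠ 0) :
    ∃ (n : ℕ) (bN : Module.Basis (Fin n) k N) (χof : Fin n → (G →* kˣ)),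
      ∀ (j : Fin n) (g : G),
        MonoidAlgebra.of k G g • bN j = ((χof j g : kˣ) : k) • bN j := by
  classical
  have internal : DirectSum.IsInternal (eig k G N) :=
    DirectSum.isInternal_submodule_of_iSupIndep_of_iSup_eq_top
      (eig_indep k G N hchar) (iSup_eig_eq_top k G N hchar)
  let v : ∀ χ : G →* kˣ, Module.Basis (Fin (Module.finrank k (eig k G N χ))) k (eig k G N χ) :=
    fun χ => Module.finBasis k _
  let b := internal.collectedBasis v
  let e := Fintype.equivFin (Σ χ : G →* kˣ, Fin (Module.finrank k (eig k G N χ)))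
  refine ⟨_, b.reindex e, fun j => (e.symm j).1, fun j g => ?_⟩
  have hmem : (b.reindex e) j ∈ eig k G N (e.symm j).1 := by
    rw [Module.Basis.reindex_apply]
    exact internal.collectedBasis_mem v (e.symm j)
  exact hmem g
instance : IsScalarTower k (MonoidAlgebra k G) (MonoidAlgebra (Polynomial k) G) :=
  ⟨fun c b a => by
    show BtoA k G (c • b) * a = c • (BtoA k G b * a)
    rw [map_smul, smul_mul_assoc]⟩

instance : SMulCommClass (MonoidAlgebra k G) k (MonoidAlgebra (Polynomial k) G) :=
  ⟨fun b c a => by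
    show BtoA k G b * (c • a) = c • (BtoA k G b * a)
    exact mul_smul_comm c _ a⟩

lemma BtoA_of (g : G) :
    BtoA k G (MonoidAlgebra.of k G g) = MonoidAlgebra.single g (1 : Polynomial k) := by
  rw [BtoA, MonoidAlgebra.lift_of, MonoidAlgebra.of_apply]

lemma of_smul_A (g : G) (a : MonoidAlgebra (Polynomial k) G) :
    MonoidAlgebra.of k G g • a = MonoidAlgebra.single g (1 : Polynomial k) * a := by
  show BtoA k G (MonoidAlgebra.of k G g) * a = _
  rw [BtoA_of]

lemma hcard (hchar : (Fintype.card G : k) ≠ 0) :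
    (Fintype.card G : Polynomial k) * algebraMap k (Polynomial k) ((Fintype.card G : k)⁻¹)
      = 1 := by
  rw [← map_natCast (algebraMap k (Polynomial k)), ← map_mul, mul_inv_cancel₀ hchar, map_one]

lemma idm_coeff_one (S : Type*) [CommRing S] [Algebra k S] (χ : G →* kˣ) :
    (idm k G S χ).coeff 1 = algebraMap k S ((Fintype.card G : k)⁻¹) := by
  rw [idm_apply]
  simp

/-- A `χ`-eigenvector in `k[t][G]` is a `k[t]`-multiple of `idm χ`. -/
lemma eig_A (hchar : (Fintype.card G : k) ≠ 0) (χ : G →* kˣ)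
    (a : MonoidAlgebra (Polynomial k) G)
    (ha : ∀ g : G, MonoidAlgebra.of k G g • a = ((χ g : kˣ) : k) • a) :
    a = ((Fintype.card G : Polynomial k) * a.coeff 1) • idm k G (Polynomial k) χ := by
  refine MonoidAlgebra.ext (Finsupp.ext fun g => ?_)
  rw [MonoidAlgebra.coeff_smul, Finsupp.smul_apply, idm_apply, smul_eq_mul]
  have h1 := ha g
  rw [of_smul_A] at h1
  have h2 : (MonoidAlgebra.single g (1 : Polynomial k) * a).coeff g
      = (((χ g : kˣ) : k) • a).coeff g := by rw [h1]
  rw [MonoidAlgebra.single_mul_apply, one_mul, inv_mul_cancel] at h2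
  rw [MonoidAlgebra.coeff_smul, Finsupp.smul_apply, Algebra.smul_def] at h2
  -- h2 : a 1 = algebraMap (χ g) * a g
  have hu : algebraMap k (Polynomial k) ((χ g⁻¹ : kˣ) : k)
      * algebraMap k (Polynomial k) ((χ g : kˣ) : k) = 1 := by
    rw [← map_mul, ← Units.val_mul, ← map_mul, inv_mul_cancel, map_one, Units.val_one, map_one]
  have h3 : a.coeff g = algebraMap k (Polynomial k) ((χ g⁻¹ : kˣ) : k) * a.coeff 1 := by
    rw [h2, ← mul_assoc, hu, one_mul]
  have hc := hcard k G hchar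
  rw [h3, map_mul]
  linear_combination (-(algebraMap k (Polynomial k) ((χ g⁻¹ : kˣ) : k) * a.coeff 1)) * hc

/-- Smul by an element of `k[G]` as a `k`-linear endomorphism. -/
def smulLin (P : Type*) [AddCommGroup P] [Module k P] [Module (MonoidAlgebra k G) P]
    [SMulCommClass (MonoidAlgebra k G) k P] (b : MonoidAlgebra k G) : P →ₗ[k] P where
  toFun := (b • ·)
  map_add' := smul_add b
  map_smul' := fun c x => by simpa using smul_comm b c x

section EigenBasis

set_option maxHeartbeats 1000000

variable (J : Type*) [Fintype J] (bN : Module.Basis J k N) (χof : J → (G →* kˣ))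
  (ι : Type*) [Fintype ι]

/-- The prescribed eigen-values. -/
def eigVec (c : ι × J → Polynomial k) (j : J) : ι → MonoidAlgebra (Polynomial k) G :=
  fun i => c (i, j) • idm k G (Polynomial k) (χof j)

/-- The `k`-linear map with prescribed values on the eigenbasis. -/
def mkHaux (c : ι × J → Polynomial k) :
    N →ₗ[k] (ι → MonoidAlgebra (Polynomial k) G) :=
  bN.constr k (fun j => eigVec k G J χof ι c j)

lemma mkHaux_basis (c : ι × J → Polynomial k) (j : J) :
    mkHaux k G N J bN χof ι c (bN j) = eigVec k G J χof ι c j :=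
  Module.Basis.constr_basis bN k _ j

lemma mkHaux_equivariant
    (heig : ∀ (j : J) (g : G),
      MonoidAlgebra.of k G g • bN j = ((χof j g : kˣ) : k) • bN j)
    (c : ι × J → Polynomial k) (g : G) (x : N) :
    mkHaux k G N J bN χof ι c (MonoidAlgebra.of k G g • x)
      = MonoidAlgebra.of k G g • mkHaux k G N J bN χof ι c x := by
  have key : (mkHaux k G N J bN χof ι c).comp (smulLin k G N (MonoidAlgebra.of k G g))
      = (smulLin k G (ι → MonoidAlgebra (Polynomial k) G)
          (MonoidAlgebra.of k G g)).comp (mkHaux k G N J bN χof ι c) := by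
    refine bN.ext fun j => ?_
    show mkHaux k G N J bN χof ι c (MonoidAlgebra.of k G g • bN j)
        = MonoidAlgebra.of k G g • mkHaux k G N J bN χof ι c (bN j)
    rw [heig j g, map_smul, mkHaux_basis]
    funext i
    rw [Pi.smul_apply, Pi.smul_apply]
    show ((χof j g : kˣ) : k) • (c (i, j) • idm k G (Polynomial k) (χof j))
        = MonoidAlgebra.of k G g • (c (i, j) • idm k G (Polynomial k) (χof j))
    rw [of_smul_A, mul_smul_comm, single_mul_idm, one_mul, algebraMap_smul, smul_comm]
  exact LinearMap.congr_fun key x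

/-- Upgrade a `k`-linear `G`-equivariant map to a `k[G]`-linear map. -/
def toBLinear (f : N →ₗ[k] (ι → MonoidAlgebra (Polynomial k) G))
    (hf : ∀ (g : G) (x : N),
      f (MonoidAlgebra.of k G g • x) = MonoidAlgebra.of k G g • f x) :
    N →ₗ[MonoidAlgebra k G] (ι → MonoidAlgebra (Polynomial k) G) where
  toFun := f
  map_add' := map_add f
  map_smul' := fun b x => by
    show f (b • x) = b • f x
    induction b using MonoidAlgebra.induction_linear with
    | zero => rw [zero_smul, zero_smul, map_zero]
    | add b1 b2 h1 h2 => rw [add_smul, add_smul, map_add, h1, h2]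
    | single g c =>
      show f ((MonoidAlgebra.single g c) • x) = (MonoidAlgebra.single g c) • f x
      have h1 : MonoidAlgebra.single g c = c • MonoidAlgebra.of k G g := by
        rw [MonoidAlgebra.of_apply, MonoidAlgebra.smul_single', mul_one]
      rw [h1, smul_assoc, map_smul, hf g x, smul_assoc]

lemma toBLinear_apply (f : N →ₗ[k] (ι → MonoidAlgebra (Polynomial k) G))
    (hf : ∀ (g : G) (x : N),
      f (MonoidAlgebra.of k G g • x) = MonoidAlgebra.of k G g • f x) (x : N) :
    toBLinear k G N ι f hf x = f x := rfl

/-- The `k[G]`-linear map `N → (ι → k[t][G])` with prescribed values on the eigenbasis. -/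
def mkH (heig : ∀ (j : J) (g : G),
      MonoidAlgebra.of k G g • bN j = ((χof j g : kˣ) : k) • bN j)
    (c : ι × J → Polynomial k) :
    N →ₗ[MonoidAlgebra k G] (ι → MonoidAlgebra (Polynomial k) G) :=
  toBLinear k G N ι (mkHaux k G N J bN χof ι c)
    (mkHaux_equivariant k G N J bN χof ι heig c)

lemma mkH_basis (heig : ∀ (j : J) (g : G),
      MonoidAlgebra.of k G g • bN j = ((χof j g : kˣ) : k) • bN j)
    (c : ι × J → Polynomial k) (j : J) :
    mkH k G N J bN χof ι heig c (bN j) = eigVec k G J χof ι c j := by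
  show mkHaux k G N J bN χof ι c (bN j) = _
  exact mkHaux_basis k G N J bN χof ι c j

end EigenBasis
section Coords

set_option maxHeartbeats 1000000

variable (J : Type*) [Fintype J] (bN : Module.Basis J k N) (χof : J → (G →* kˣ))
  (ι : Type*) [Fintype ι]

lemma hom_ext (f g : N →ₗ[MonoidAlgebra k G] (ι → MonoidAlgebra (Polynomial k) G))
    (h : ∀ j, f (bN j) = g (bN j)) : f = g := by
  have h2 : (f.restrictScalars k) = (g.restrictScalars k) := bN.ext fun j => h j
  exact LinearMap.ext fun x => LinearMap.congr_fun h2 x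

/-- The coordinates of a `k[G]`-linear map `N → (ι → k[t][G])`. -/
def coordsH : (N →ₗ[MonoidAlgebra k G] (ι → MonoidAlgebra (Polynomial k) G)) →ₗ[Polynomial k]
    (ι × J → Polynomial k) where
  toFun f := fun p => (Fintype.card G : Polynomial k) * (f (bN p.2) p.1).coeff 1
  map_add' f g := by
    funext p
    simp only [LinearMap.add_apply, Pi.add_apply]
    rw [MonoidAlgebra.coeff_add, Finsupp.add_apply]
    ring
  map_smul' r f := by
    funext p
    simp only [LinearMap.smul_apply, Pi.smul_apply, RingHom.id_apply]
    rw [MonoidAlgebra.coeff_smul, Finsupp.smul_apply]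
    simp only [smul_eq_mul]
    ring

variable (heig : ∀ (j : J) (g : G),
    MonoidAlgebra.of k G g • bN j = ((χof j g : kˣ) : k) • bN j)

/-- `mkH` as a `k[t]`-linear map. -/
def mkL : (ι × J → Polynomial k) →ₗ[Polynomial k]
    (N →ₗ[MonoidAlgebra k G] (ι → MonoidAlgebra (Polynomial k) G)) where
  toFun c := mkH k G N J bN χof ι heig c
  map_add' c d := by
    refine hom_ext k G N J bN ι _ _ fun j => ?_
    rw [LinearMap.add_apply, mkH_basis, mkH_basis, mkH_basis]
    funext i
    simp only [eigVec, Pi.add_apply, add_smul]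
  map_smul' r c := by
    refine hom_ext k G N J bN ι _ _ fun j => ?_
    rw [RingHom.id_apply, LinearMap.smul_apply, mkH_basis, mkH_basis]
    funext i
    simp only [eigVec, Pi.smul_apply, smul_eq_mul, mul_smul]

lemma coords_mk (hchar : (Fintype.card G : k) ≠ 0) (c : ι × J → Polynomial k) :
    coordsH k G N J bN ι (mkL k G N J bN χof ι heig c) = c := by
  funext p
  obtain ⟨i, j⟩ := p
  show (Fintype.card G : Polynomial k) * ((mkH k G N J bN χof ι heig c (bN j)) i).coeff 1 = c (i, j)
  rw [mkH_basis]
  show (Fintype.card G : Polynomial k) * ((c (i, j) • idm k G (Polynomial k) (χof j)).coeff 1)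
      = c (i, j)
  rw [MonoidAlgebra.coeff_smul, Finsupp.smul_apply, idm_coeff_one, smul_eq_mul, mul_left_comm,
    hcard k G hchar, mul_one]

lemma mk_coords (hchar : (Fintype.card G : k) ≠ 0)
    (f : N →ₗ[MonoidAlgebra k G] (ι → MonoidAlgebra (Polynomial k) G)) :
    mkL k G N J bN χof ι heig (coordsH k G N J bN ι f) = f := by
  refine hom_ext k G N J bN ι _ _ fun j => ?_
  show mkH k G N J bN χof ι heig _ (bN j) = f (bN j)
  rw [mkH_basis]
  funext i
  have ha : ∀ g, MonoidAlgebra.of k G g • (f (bN j) i)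
      = ((χof j g : kˣ) : k) • (f (bN j) i) := by
    intro g
    have h1 : MonoidAlgebra.of k G g • f (bN j) = ((χof j g : kˣ) : k) • f (bN j) := by
      rw [← map_smul, heig j g,
        ← algebraMap_smul (MonoidAlgebra k G) ((χof j g : kˣ) : k) (bN j), map_smul,
        algebraMap_smul]
    calc MonoidAlgebra.of k G g • (f (bN j) i)
        = (MonoidAlgebra.of k G g • f (bN j)) i := rfl
      _ = (((χof j g : kˣ) : k) • f (bN j)) i := by rw [h1]
      _ = ((χof j g : kˣ) : k) • (f (bN j) i) := rfl
  exact (eig_A k G hchar (χof j) _ ha).symm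

/-- The coordinate equivalence. -/
def EH (hchar : (Fintype.card G : k) ≠ 0) :
    (N →ₗ[MonoidAlgebra k G] (ι → MonoidAlgebra (Polynomial k) G)) ≃ₗ[Polynomial k]
    (ι × J → Polynomial k) :=
  LinearEquiv.ofLinear (coordsH k G N J bN ι) (mkL k G N J bN χof ι heig)
    (LinearMap.ext fun c => coords_mk k G N J bN χof ι heig hchar c)
    (LinearMap.ext fun f => mk_coords k G N J bN χof ι heig hchar f)

include bN heig in
open scoped Classical in
lemma det_homMap (hchar : (Fintype.card G : k) ≠ 0)
    (φ : (ι → MonoidAlgebra (Polynomial k) G) →ₗ[MonoidAlgebra (Polynomial k) G]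
      (ι → MonoidAlgebra (Polynomial k) G)) :
    LinearMap.det (A := Polynomial k)
        (M := N →ₗ[MonoidAlgebra k G] (ι → MonoidAlgebra (Polynomial k) G))
        (homMap k G N ι φ)
      = ∏ j : J, chiA k G (Polynomial k) (χof j) (LinearMap.det φ) := by
  classical
  have hconj := LinearMap.det_conj (A := Polynomial k)
    (M := N →ₗ[MonoidAlgebra k G] (ι → MonoidAlgebra (Polynomial k) G))
    (N := ι × J → Polynomial k) (homMap k G N ι φ) (EH k G N J bN χof ι heig hchar)
  rw [← hconj]
  have hmat : ((EH k G N J bN χof ι heig hchar) : _ →ₗ[Polynomial k] _)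
        ∘ₗ homMap k G N ι φ ∘ₗ ((EH k G N J bN χof ι heig hchar).symm : _ →ₗ[Polynomial k] _)
      = Matrix.toLin' (Matrix.blockDiagonal
          (fun j : J => (LinearMap.toMatrix' φ).map (chiA k G (Polynomial k) (χof j)))) := by
    apply LinearMap.ext
    intro c
    funext p
    obtain ⟨i, j⟩ := p
    have h4 : φ (eigVec k G J χof ι c j) i
        = ∑ i', (c (i', j) * chiA k G (Polynomial k) (χof j) (LinearMap.toMatrix' φ i i'))
            • idm k G (Polynomial k) (χof j) := by
      conv_lhs => rw [← Matrix.toLin'_toMatrix' φ]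
      rw [Matrix.toLin'_apply]
      show ∑ i', LinearMap.toMatrix' φ i i' * eigVec k G J χof ι c j i' = _
      refine Finset.sum_congr rfl fun i' _ => ?_
      show LinearMap.toMatrix' φ i i' * (c (i', j) • idm k G (Polynomial k) (χof j)) = _
      rw [mul_smul_comm, mul_idm, smul_smul]
    have h5 : Matrix.toLin' (Matrix.blockDiagonal
          (fun j : J => (LinearMap.toMatrix' φ).map (chiA k G (Polynomial k) (χof j)))) c
          (i, j)
        = ∑ i', chiA k G (Polynomial k) (χof j) (LinearMap.toMatrix' φ i i') * c (i', j) := by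
      rw [Matrix.toLin'_apply]
      show ∑ p : ι × J, Matrix.blockDiagonal
          (fun j : J => (LinearMap.toMatrix' φ).map (chiA k G (Polynomial k) (χof j)))
          (i, j) p * c p = _
      rw [Fintype.sum_prod_type, Finset.sum_comm, Finset.sum_eq_single j]
      · refine Finset.sum_congr rfl fun i' _ => ?_
        rw [Matrix.blockDiagonal_apply, if_pos rfl, Matrix.map_apply]
      · intro j' _ hj'
        refine Finset.sum_eq_zero fun i' _ => ?_
        rw [Matrix.blockDiagonal_apply, if_neg (Ne.symm hj'), zero_mul]
      · intro h
        exact absurd (Finset.mem_univ j) h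
    show (Fintype.card G : Polynomial k)
        * ((φ ((mkH k G N J bN χof ι heig c) (bN j))) i).coeff 1
      = Matrix.toLin' (Matrix.blockDiagonal
          (fun j : J => (LinearMap.toMatrix' φ).map (chiA k G (Polynomial k) (χof j)))) c
          (i, j)
    rw [mkH_basis k G N J bN χof ι heig c j, h5]
    have h6 : φ (eigVec k G J χof ι c j) i
        = (∑ i', (c (i', j) * chiA k G (Polynomial k) (χof j) (LinearMap.toMatrix' φ i i'))
            • idm k G (Polynomial k) (χof j)) := h4
    rw [h6, MonoidAlgebra.coeff_sum, Finset.sum_apply', Finset.mul_sum]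
    refine Finset.sum_congr rfl fun i' _ => ?_
    rw [MonoidAlgebra.coeff_smul, Finsupp.smul_apply, idm_coeff_one, smul_eq_mul, mul_left_comm,
      hcard k G hchar, mul_one, mul_comm]
  rw [hmat, LinearMap.det_toLin', Matrix.det_blockDiagonal]
  refine Finset.prod_congr rfl fun j _ => ?_
  rw [← LinearMap.det_toMatrix' φ]
  exact (RingHom.map_det (chiA k G (Polynomial k) (χof j)).toRingHom
    (LinearMap.toMatrix' φ)).symm

end Coords
section ActSide

set_option maxHeartbeats 1000000

variable (J : Type*) [Fintype J] (bN : Module.Basis J k N) (χof : J → (G →* kˣ))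

lemma act_basis (heig : ∀ (j : J) (g : G),
      MonoidAlgebra.of k G g • bN j = ((χof j g : kˣ) : k) • bN j)
    (a : MonoidAlgebra (Polynomial k) G) (j : J) :
    act k G N a ((1 : Polynomial k) ⊗ₜ[k] bN j)
      = chiA k G (Polynomial k) (χof j) a • ((1 : Polynomial k) ⊗ₜ[k] bN j) := by
  induction a using MonoidAlgebra.induction_linear with
  | zero => rw [map_zero, map_zero, LinearMap.zero_apply, zero_smul]
  | add f g hf hg => rw [map_add, map_add, LinearMap.add_apply, hf, hg, add_smul]
  | single g p =>
    show act k G N (MonoidAlgebra.single g p) ((1 : Polynomial k) ⊗ₜ[k] bN j)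
        = chiA k G (Polynomial k) (χof j) (MonoidAlgebra.single g p)
            • ((1 : Polynomial k) ⊗ₜ[k] bN j)
    rw [chiA_single]
    have hact : act k G N (MonoidAlgebra.single g p) = p • gRepT k G N g := by
      show MonoidAlgebra.lift (Polynomial k)
          (Module.End (Polynomial k) (Polynomial k ⊗[k] N)) G (gRepT k G N)
          (MonoidAlgebra.single g p) = _
      rw [MonoidAlgebra.lift_single]
    rw [hact, LinearMap.smul_apply]
    have h1 : gRepT k G N g ((1 : Polynomial k) ⊗ₜ[k] bN j)
        = ((χof j g : kˣ) : k) • ((1 : Polynomial k) ⊗ₜ[k] bN j) := by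
      show (gRep k G N g).baseChange (Polynomial k) ((1 : Polynomial k) ⊗ₜ[k] bN j) = _
      rw [LinearMap.baseChange_tmul]
      have h2 : gRep k G N g (bN j) = ((χof j g : kˣ) : k) • bN j := heig j g
      rw [h2, TensorProduct.tmul_smul]
    rw [h1, mul_smul, algebraMap_smul, smul_comm]

lemma det_act (heig : ∀ (j : J) (g : G),
      MonoidAlgebra.of k G g • bN j = ((χof j g : kˣ) : k) • bN j)
    (a : MonoidAlgebra (Polynomial k) G) :
    LinearMap.det (A := Polynomial k) (M := Polynomial k ⊗[k] N) (act k G N a)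
      = ∏ j : J, chiA k G (Polynomial k) (χof j) a := by
  classical
  rw [← LinearMap.det_toMatrix (bN.baseChange (Polynomial k)) (act k G N a)]
  have hdiag : LinearMap.toMatrix (bN.baseChange (Polynomial k)) (bN.baseChange (Polynomial k))
        (act k G N a)
      = Matrix.diagonal (fun j => chiA k G (Polynomial k) (χof j) a) := by
    ext j' j
    rw [LinearMap.toMatrix_apply, Matrix.diagonal_apply]
    rw [Module.Basis.baseChange_apply, act_basis k G N J bN χof heig a j, map_smul]
    rw [← Module.Basis.baseChange_apply (S := Polynomial k), Module.Basis.repr_self, Finsupp.smul_apply,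
      Finsupp.single_apply, smul_eq_mul]
    by_cases h : j = j'
    · subst h
      rw [if_pos rfl, if_pos rfl, mul_one]
    · rw [if_neg h, if_neg (Ne.symm h), mul_zero]
  rw [hdiag, Matrix.det_diagonal]

end ActSide
theorem stmt_8 [IsAlgClosed k] (hchar : (Fintype.card G : k) ≠ 0)
    (ι : Type*) [Fintype ι]
    (φ : (ι → MonoidAlgebra (Polynomial k) G) →ₗ[MonoidAlgebra (Polynomial k) G]
      (ι → MonoidAlgebra (Polynomial k) G)) :
    LinearMap.det (A := Polynomial k)
        (M := N →ₗ[MonoidAlgebra k G] (ι → MonoidAlgebra (Polynomial k) G))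
        (homMap k G N ι φ)
      = LinearMap.det (A := Polynomial k) (M := Polynomial k ⊗[k] N)
          (act k G N (LinearMap.det φ)) := by
  classical
  haveI := neZero_exponent k G hchar
  obtain ⟨eG⟩ := CommGroup.monoidHom_mulEquiv_of_hasEnoughRootsOfUnity G k
  haveI : Finite (G →* kˣ) := Finite.of_equiv G eG.toEquiv.symm
  haveI : Fintype (G →* kˣ) := Fintype.ofFinite _
  obtain ⟨n, bN, χof, heig⟩ := exists_eigenbasis k G N hchar
  rw [det_homMap k G N (Fin n) bN χof ι heig hchar φ,
    det_act k G N (Fin n) bN χof heig (LinearMap.det φ)]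

end Stmt8
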